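/- Let i_1 < i_2 < i_3 be three slope indices of a multislope instance with b_{i_1} < b_{i_2} < b_{i_3} and r_{i_1} > r_{i_2} > r_{i_3}, and suppose the intersection time of slopes i_1 and i_2 is strictly smaller than that of slopes i_2 and i_3, i.e., (b_{i_2} − b_{i_1})/(r_{i_1} − r_{i_2}) < (b_{i_3} − b_{i_2})/(r_{i_2} − r_{i_3}). Then for any Δ > 0, shifting probability mass Δ/(b_{i_2} − b_{i_1}) from slope i_1 and Δ/(b_{i_3} − b_{i_2}) from slope i_3 onto slope i_2 preserves the expected buying cost Σ p_i b_i and strictly decreases the expected rental rate Σ p_i r_i, the decrease being Δ·((r_{i_1} − r_{i_2})/(b_{i_2} − b_{i_1}) − (r_{i_2} − r_{i_3})/(b_{i_3} − b_{i_2})) > 0. -/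
import Mathlib


/-- Shifting probability mass from two outer slopes onto a middle slope keeps
the total mass and buying cost unchanged and strictly decreases the rental rate. -/
theorem probability_shift_decreases_rent (k : ℕ) (b r : ℕ → ℝ) (p : ℕ → ℝ)
    (i₁ i₂ i₃ : ℕ) (h12 : i₁ < i₂) (h23 : i₂ < i₃) (h3k : i₃ ≤ k)
    (hb12 : b i₁ < b i₂) (hb23 : b i₂ < b i₃)
    (hr12 : r i₂ < r i₁) (hr23 : r i₃ < r i₂)
    (hs : (b i₂ - b i₁) / (r i₁ - r i₂) < (b i₃ - b i₂) / (r i₂ - r i₃))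
    (Δ : ℝ) (hΔ : 0 < Δ)
    (p' : ℕ → ℝ)
    (hp' : ∀ j, p' j =
      if j = i₁ then p i₁ - Δ / (b i₂ - b i₁)
      else if j = i₂ then p i₂ + Δ / (b i₂ - b i₁) + Δ / (b i₃ - b i₂)
      else if j = i₃ then p i₃ - Δ / (b i₃ - b i₂)
      else p j)
    (hnn : ∀ j ≤ k, 0 ≤ p' j) :
    (∑ i ∈ Finset.range (k + 1), p' i = ∑ i ∈ Finset.range (k + 1), p i) ∧
      (∑ i ∈ Finset.range (k + 1), p' i * b i = ∑ i ∈ Finset.range (k + 1), p i * b i) ∧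
      (∑ i ∈ Finset.range (k + 1), p i * r i - ∑ i ∈ Finset.range (k + 1), p' i * r i
        = Δ * ((r i₁ - r i₂) / (b i₂ - b i₁) - (r i₂ - r i₃) / (b i₃ - b i₂))) ∧
      0 < Δ * ((r i₁ - r i₂) / (b i₂ - b i₁) - (r i₂ - r i₃) / (b i₃ - b i₂)) := by
  have hne12 : i₁ ≠ i₂ := h12.ne
  have hne13 : i₁ ≠ i₃ := (h12.trans h23).ne
  have hne23 : i₂ ≠ i₃ := h23.ne
  have hb12' : (0:ℝ) < b i₂ - b i₁ := by linarith
  have hb23' : (0:ℝ) < b i₃ - b i₂ := by linarith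
  have hr12' : (0:ℝ) < r i₁ - r i₂ := by linarith
  have hr23' : (0:ℝ) < r i₂ - r i₃ := by linarith
  have hsub : ({i₁, i₂, i₃} : Finset ℕ) ⊆ Finset.range (k + 1) := by
    intro j hj
    simp only [Finset.mem_insert, Finset.mem_singleton] at hj
    rcases hj with rfl | rfl | rfl <;> simp only [Finset.mem_range] <;> omega
  have key : ∀ f : ℕ → ℝ,
      ∑ i ∈ Finset.range (k + 1), p' i * f i - ∑ i ∈ Finset.range (k + 1), p i * f i
        = (p' i₁ - p i₁) * f i₁ + (p' i₂ - p i₂) * f i₂ + (p' i₃ - p i₃) * f i₃ := by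
    intro f
    rw [← Finset.sum_sub_distrib]
    have : ∀ i, p' i * f i - p i * f i = (p' i - p i) * f i := by intro i; ring
    simp only [this]
    rw [← Finset.sum_subset hsub (by
      intro x _ hx
      simp only [Finset.mem_insert, Finset.mem_singleton, not_or] at hx
      rw [hp' x, if_neg hx.1, if_neg hx.2.1, if_neg hx.2.2]
      ring)]
    rw [Finset.sum_insert (by simp [hne12, hne13]),
        Finset.sum_insert (by simp [hne23]), Finset.sum_singleton]
    ring
  have e1 : p' i₁ - p i₁ = -(Δ / (b i₂ - b i₁)) := by
    rw [hp' i₁, if_pos rfl]; ring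
  have e2 : p' i₂ - p i₂ = Δ / (b i₂ - b i₁) + Δ / (b i₃ - b i₂) := by
    rw [hp' i₂, if_neg hne12.symm, if_pos rfl]; ring
  have e3 : p' i₃ - p i₃ = -(Δ / (b i₃ - b i₂)) := by
    rw [hp' i₃, if_neg hne13.symm, if_neg hne23.symm, if_pos rfl]; ring
  have hpos : 0 < Δ * ((r i₁ - r i₂) / (b i₂ - b i₁) - (r i₂ - r i₃) / (b i₃ - b i₂)) := by
    have h := (div_lt_div_iff₀ hr12' hr23').mp hs
    have : (r i₂ - r i₃) / (b i₃ - b i₂) < (r i₁ - r i₂) / (b i₂ - b i₁) := by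
      rw [div_lt_div_iff₀ hb23' hb12']; nlinarith
    have : 0 < (r i₁ - r i₂) / (b i₂ - b i₁) - (r i₂ - r i₃) / (b i₃ - b i₂) := by linarith
    positivity
  refine ⟨?_, ?_, ?_, hpos⟩
  · have h := key (fun _ => 1)
    simp only [mul_one] at h
    rw [e1, e2, e3] at h; linarith
  · have h := key b
    rw [e1, e2, e3] at h
    have : (∑ i ∈ Finset.range (k + 1), p' i * b i) - ∑ i ∈ Finset.range (k + 1), p i * b i = 0 := by
      rw [h]; field_simp; ring
    linarith
  · have h := key r
    rw [e1, e2, e3] at h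
    have : (∑ i ∈ Finset.range (k + 1), p' i * r i) - ∑ i ∈ Finset.range (k + 1), p i * r i
        = -(Δ * ((r i₁ - r i₂) / (b i₂ - b i₁) - (r i₂ - r i₃) / (b i₃ - b i₂))) := by
      rw [h]; field_simp; ring
    linarith
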